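/- Let (X, ≤) be any linear order and define x ∼fin y iff the closed interval between x and y (Icc x y if x ≤ y, Icc y x if y ≤ x) is finite. Then ∼fin is an equivalence relation and each of its equivalence classes, regarded as a suborder of X, is finite or order-isomorphic to ℕ (order type ω), to ℕᵒᵈ (order type ω*), or to ℤ. -/

import Mathlib

/-- `x ∼fin y` iff the closed interval between `x` and `y` is finite. -/
def SimFin {X : Type*} [LinearOrder X] (x y : X) : Prop :=
  (x ≤ y ∧ (Set.Icc x y).Finite) ∨ (y ≤ x ∧ (Set.Icc y x).Finite)

theorem simFin_iff_uIcc {X : Type*} [LinearOrder X] {x y : X} :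
    SimFin x y ↔ (Set.uIcc x y).Finite := by
  rcases le_total x y with h | h
  · rw [Set.uIcc_of_le h]
    constructor
    · rintro (⟨-, hf⟩ | ⟨h', hf⟩)
      · exact hf
      · rw [le_antisymm h h'] at hf ⊢; exact hf.subset (Set.Icc_subset_Icc_left le_rfl)
    · exact fun hf => Or.inl ⟨h, hf⟩
  · rw [Set.uIcc_of_ge h]
    constructor
    · rintro (⟨h', hf⟩ | ⟨-, hf⟩)
      · rw [le_antisymm h h'] at hf ⊢; exact hf.subset (Set.Icc_subset_Icc_left le_rfl)
      · exact hf
    · exact fun hf => Or.inr ⟨h, hf⟩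

theorem simFin_equivalence {X : Type*} [LinearOrder X] : Equivalence (SimFin (X := X)) := by
  constructor
  · intro x
    exact Or.inl ⟨le_rfl, by simp⟩
  · intro x y h
    rw [simFin_iff_uIcc] at h ⊢
    rwa [Set.uIcc_comm]
  · intro x y z hxy hyz
    rw [simFin_iff_uIcc] at hxy hyz ⊢
    exact ((hxy.union hyz).subset (Set.uIcc_subset_uIcc_union_uIcc (b := y)))

noncomputable def auxIsoNatOD {ι : Type*} [LinearOrder ι] [LocallyFiniteOrder ι]
    [OrderTop ι] [NoMinOrder ι] : ι ≃o ℕᵒᵈ :=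
  letI := LinearLocallyFiniteOrder.succOrder ιᵒᵈ
  letI := LinearLocallyFiniteOrder.predOrder ιᵒᵈ
  (OrderIso.dualDual ι).trans (orderIsoNatOfLinearSuccPredArch (ι := ιᵒᵈ)).dual

theorem aux_classify (ι : Type*) [LinearOrder ι] [Nonempty ι] [Infinite ι]
    (h : ∀ a b : ι, (Set.Icc a b).Finite) :
    Nonempty (ι ≃o ℕ) ∨ Nonempty (ι ≃o ℕᵒᵈ) ∨ Nonempty (ι ≃o ℤ) := by
  letI : LocallyFiniteOrder ι := LocallyFiniteOrder.ofFiniteIcc h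
  by_cases htop : ∃ m : ι, ∀ y : ι, y ≤ m
  · obtain ⟨m, hm⟩ := htop
    by_cases hbot : ∃ m : ι, ∀ y : ι, m ≤ y
    · obtain ⟨b, hb⟩ := hbot
      exfalso
      exact Set.infinite_univ ((h b m).subset fun y _ => ⟨hb y, hm y⟩)
    · push_neg at hbot
      letI : OrderTop ι := { top := m, le_top := hm }
      haveI : NoMinOrder ι := ⟨fun a => by
        obtain ⟨y, hy⟩ := hbot a
        exact ⟨y, hy⟩⟩
      exact Or.inr (Or.inl ⟨auxIsoNatOD⟩)
  · push_neg at htop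
    haveI : NoMaxOrder ι := ⟨fun a => by
      obtain ⟨y, hy⟩ := htop a
      exact ⟨y, hy⟩⟩
    by_cases hbot : ∃ m : ι, ∀ y : ι, m ≤ y
    · obtain ⟨b, hb⟩ := hbot
      letI : OrderBot ι := { bot := b, bot_le := hb }
      letI := LinearLocallyFiniteOrder.succOrder ι
      letI := LinearLocallyFiniteOrder.predOrder ι
      exact Or.inl ⟨orderIsoNatOfLinearSuccPredArch⟩
    · push_neg at hbot
      haveI : NoMinOrder ι := ⟨fun a => by
        obtain ⟨y, hy⟩ := hbot a
        exact ⟨y, hy⟩⟩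
      letI := LinearLocallyFiniteOrder.succOrder ι
      letI := LinearLocallyFiniteOrder.predOrder ι
      exact Or.inr (Or.inr ⟨orderIsoIntOfLinearSuccPredArch⟩)

/-- In any linear order, ∼fin is an equivalence relation and each class, as a
suborder, is finite or order-isomorphic to ℕ, ℕᵒᵈ or ℤ. -/
theorem simFin_classes (X : Type*) [LinearOrder X] :
    Equivalence (SimFin (X := X)) ∧
    ∀ x : X,
      ({y : X | SimFin y x}).Finite ∨
      Nonempty ({y : X | SimFin y x} ≃o ℕ) ∨
      Nonempty ({y : X | SimFin y x} ≃o ℕᵒᵈ) ∨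
      Nonempty ({y : X | SimFin y x} ≃o ℤ) := by
  have heq := simFin_equivalence (X := X)
  refine ⟨heq, fun x => ?_⟩
  by_cases hfin : ({y : X | SimFin y x}).Finite
  · exact Or.inl hfin
  right
  have hIcc : ∀ a b : {y : X | SimFin y x}, (Set.Icc a b).Finite := by
    intro a b
    have hab : SimFin (a : X) (b : X) := heq.trans a.2 (heq.symm b.2)
    rw [simFin_iff_uIcc] at hab
    have : Set.Icc a b = Subtype.val ⁻¹' Set.Icc (a : X) (b : X) := by
      ext z; simp [Set.mem_Icc, Subtype.coe_le_coe]
    rw [this]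
    refine Set.Finite.preimage Subtype.val_injective.injOn ?_
    exact hab.subset (by rcases le_total (a : X) b with h | h <;>
      simp [Set.uIcc_of_le, Set.uIcc_of_ge, h, Set.Icc_subset_Icc])
  haveI : Nonempty {y : X | SimFin y x} := ⟨⟨x, heq.refl x⟩⟩
  haveI : Infinite {y : X | SimFin y x} := Set.infinite_coe_iff.mpr hfin
  exact aux_classify _ hIcc
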